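/- For all real x ≥ 2, Π_{p ≤ x, p prime} (1 − 1/p) ≥ c/log x for some absolute constant c > 0; consequently, for every ε > 0 and all integers h ≥ 2, Π_{p | h} (1 − 1/p) ≥ Π_{p ≤ h} (1 − 1/p) ≫_ε h^{−ε}. -/

import Mathlib

open Finset

private def PP (N : ℕ) : Finset ℕ := (Finset.range (N + 1)).filter Nat.Prime

private lemma mem_PP {N p : ℕ} : p ∈ PP N ↔ p ≤ N ∧ p.Prime := by
  simp [PP, Nat.lt_succ_iff, and_comm]

/-- Chebyshev: sum of log p over primes ≤ N is ≤ N log 4 -/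
private lemma cheby (N : ℕ) : ∑ p ∈ PP N, Real.log p ≤ N * Real.log 4 := by
  have h1 : ∑ p ∈ PP N, Real.log p = Real.log (primorial N) := by
    rw [primorial, Nat.cast_prod, Real.log_prod]
    · rfl
    · intro p hp
      have := (mem_PP.1 hp).2.two_le
      positivity
  rw [h1]
  calc Real.log (primorial N) ≤ Real.log (4 ^ N) := by
        apply Real.log_le_log (by exact_mod_cast primorial_pos N)
        exact_mod_cast primorial_le_4_pow N
    _ = N * Real.log 4 := by
        push_cast
        rw [Real.log_pow]

/-- Legendre lower bound: `∑_{p ≤ N} ⌊N/p⌋ log p ≤ log N!`. -/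
private lemma legendre (N : ℕ) :
    ∑ p ∈ PP N, ((N / p : ℕ) : ℝ) * Real.log p ≤ Real.log (N.factorial) := by
  have hfac : N.factorial ≠ 0 := (Nat.factorial_pos N).ne'
  -- log N! = sum over factorization support
  have h1 : Real.log (N.factorial) =
      ∑ p ∈ (N.factorial).factorization.support, ((N.factorial).factorization p : ℝ) * Real.log p := by
    conv_lhs => rw [← Nat.factorization_prod_pow_eq_self hfac]
    rw [Finsupp.prod, Nat.cast_prod, Real.log_prod]
    · refine Finset.sum_congr rfl fun p hp => ?_
      rw [Nat.cast_pow, Real.log_pow]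
    · intro p hp
      have hp2 := (Nat.prime_of_mem_primeFactors (by simpa [Nat.support_factorization] using hp)).two_le
      positivity
  rw [h1]
  have hsub : PP N ⊆ (N.factorial).factorization.support := by
    intro p hp
    obtain ⟨hpN, hpp⟩ := mem_PP.1 hp
    rw [Nat.support_factorization, Nat.mem_primeFactors]
    exact ⟨hpp, (Nat.Prime.dvd_factorial hpp).2 hpN, hfac⟩
  calc ∑ p ∈ PP N, ((N / p : ℕ) : ℝ) * Real.log p
      ≤ ∑ p ∈ PP N, ((N.factorial).factorization p : ℝ) * Real.log p := by
        refine Finset.sum_le_sum fun p hp => ?_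
        obtain ⟨hpN, hpp⟩ := mem_PP.1 hp
        have hlog : 0 ≤ Real.log p := Real.log_nonneg (by exact_mod_cast hpp.one_lt.le)
        refine mul_le_mul_of_nonneg_right ?_ hlog
        have : N / p ≤ (N.factorial).factorization p := by
          haveI : Fact p.Prime := ⟨hpp⟩
          rw [Nat.factorization_def _ hpp]
          rw [padicValNat_factorial (Nat.lt_succ_self _)]
          have hmem : 1 ∈ Finset.Ico 1 (Nat.log p N).succ := by
            rw [Finset.mem_Ico]
            refine ⟨le_refl 1, ?_⟩
            have : 1 ≤ Nat.log p N := Nat.le_log_of_pow_le hpp.one_lt (by simpa using hpN)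
            omega
          have := Finset.single_le_sum (f := fun i => N / p ^ i) (fun i _ => Nat.zero_le _) hmem
          simpa using this
        exact_mod_cast this
    _ ≤ ∑ p ∈ (N.factorial).factorization.support, ((N.factorial).factorization p : ℝ) * Real.log p := by
        refine Finset.sum_le_sum_of_subset_of_nonneg hsub fun p hp _ => ?_
        have h2 : 2 ≤ p :=
          (Nat.prime_of_mem_primeFactors (by simpa [Nat.support_factorization] using hp)).two_le
        have : (1:ℝ) ≤ p := by exact_mod_cast Nat.one_le_of_lt h2
        have hlog : 0 ≤ Real.log p := Real.log_nonneg this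
        positivity

/-- Mertens' first theorem (upper bound). -/
private lemma mertens1 {N : ℕ} (hN : 1 ≤ N) :
    ∑ p ∈ PP N, Real.log p / p ≤ Real.log N + Real.log 4 := by
  have hN0 : (0:ℝ) < N := by exact_mod_cast hN
  rw [← mul_le_mul_iff_right₀ hN0]
  calc (N:ℝ) * ∑ p ∈ PP N, Real.log p / p
      = ∑ p ∈ PP N, (N:ℝ)/p * Real.log p := by
        rw [Finset.mul_sum]; refine Finset.sum_congr rfl fun p hp => ?_; ring
    _ ≤ ∑ p ∈ PP N, (((N / p : ℕ) : ℝ) + 1) * Real.log p := by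
        refine Finset.sum_le_sum fun p hp => ?_
        obtain ⟨hpN, hpp⟩ := mem_PP.1 hp
        have hp0 : (0:ℝ) < p := by exact_mod_cast hpp.pos
        have hlog : 0 ≤ Real.log p := Real.log_nonneg (by exact_mod_cast hpp.one_lt.le)
        refine mul_le_mul_of_nonneg_right ?_ hlog
        rw [div_le_iff₀ hp0]
        have h : N < (N / p + 1) * p := by
          have h2 : N % p < p := Nat.mod_lt N hpp.pos
          calc N = p * (N / p) + N % p := (Nat.div_add_mod N p).symm
            _ < p * (N / p) + p := by omega
            _ = (N / p + 1) * p := by ring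
        have : (N:ℝ) < ((N / p : ℕ) + 1) * p := by exact_mod_cast h
        linarith
    _ = ∑ p ∈ PP N, ((N / p : ℕ) : ℝ) * Real.log p + ∑ p ∈ PP N, Real.log p := by
        rw [← Finset.sum_add_distrib]; refine Finset.sum_congr rfl fun p hp => ?_; ring
    _ ≤ Real.log (N.factorial) + N * Real.log 4 := add_le_add (legendre N) (cheby N)
    _ ≤ N * Real.log N + N * Real.log 4 := by
        refine add_le_add_left ?_ _
        calc Real.log (N.factorial) ≤ Real.log ((N:ℝ) ^ N) := by
              apply Real.log_le_log (by exact_mod_cast N.factorial_pos)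
              exact_mod_cast Nat.factorial_le_pow N
          _ = N * Real.log N := by rw [Real.log_pow]
    _ = (N:ℝ) * (Real.log N + Real.log 4) := by ring

private noncomputable def ff (n : ℕ) : ℝ := 1 / Real.log n
private noncomputable def aa (n : ℕ) : ℝ := if n.Prime then Real.log n / n else 0
private noncomputable def GG (k : ℕ) : ℝ := ∑ i ∈ Finset.range k, aa i
private noncomputable def Psi (j : ℕ) : ℝ :=
  Real.log (Real.log ((max j 2 : ℕ) : ℝ)) - Real.log 4 / Real.log ((max j 2 : ℕ) : ℝ)

private lemma aa_nonneg (n : ℕ) : 0 ≤ aa n := by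
  unfold aa
  split
  · next h =>
    have h1 : (1:ℝ) ≤ n := by exact_mod_cast h.one_lt.le
    have := Real.log_nonneg h1
    positivity
  · exact le_rfl

private lemma GG_nonneg (k : ℕ) : 0 ≤ GG k :=
  Finset.sum_nonneg fun i _ => aa_nonneg i

private lemma GG_eq (k : ℕ) : GG (k + 1) = ∑ p ∈ PP k, Real.log p / p := by
  unfold GG PP aa
  rw [Finset.sum_filter]

private lemma GG_le {k : ℕ} (hk : 1 ≤ k) : GG (k + 1) ≤ Real.log k + Real.log 4 := by
  rw [GG_eq]; exact mertens1 hk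

private lemma log_pos_nat {i : ℕ} (hi : 2 ≤ i) : 0 < Real.log i :=
  Real.log_pos (by exact_mod_cast hi)

/-- the key telescoping bound for each Abel summand -/
private lemma summand_le (i : ℕ) : (ff i - ff (i + 1)) * GG (i + 1) ≤ Psi (i + 1) - Psi i := by
  match i, (by omega : i = 0 ∨ i = 1 ∨ 2 ≤ i) with
  | 0, _ =>
    have : ff 0 = ff 1 := by unfold ff; norm_num
    have h2 : Psi 0 = Psi 1 := by unfold Psi; norm_num
    rw [this, h2]; simp
  | 1, _ =>
    have hG : GG 2 = 0 := by
      unfold GG aa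
      rw [Finset.sum_range_succ, Finset.sum_range_one]
      norm_num
    have h2 : Psi 1 = Psi 2 := by unfold Psi; norm_num
    rw [hG, h2]; simp
  | (i : ℕ), Or.inr (Or.inr hi) =>
    have hi1 : (2:ℕ) ≤ i + 1 := by omega
    have ha : 0 < Real.log i := log_pos_nat hi
    have hb : 0 < Real.log (i + 1 : ℕ) := log_pos_nat hi1
    have hab : Real.log i ≤ Real.log (i + 1 : ℕ) := by
      apply Real.log_le_log (by positivity)
      exact_mod_cast Nat.le_succ i
    have hffd : 0 ≤ ff i - ff (i + 1) := by
      unfold ff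
      rw [sub_nonneg]
      exact one_div_le_one_div_of_le ha hab
    have hG1 : GG (i + 1) ≤ Real.log i + Real.log 4 := GG_le (by omega)
    have hmax1 : max (i+1 : ℕ) 2 = (i+1 : ℕ) := max_eq_left hi1
    have hmax2 : max i 2 = i := max_eq_left hi
    calc (ff i - ff (i + 1)) * GG (i + 1)
        ≤ (ff i - ff (i + 1)) * (Real.log i + Real.log 4) :=
          mul_le_mul_of_nonneg_left hG1 hffd
      _ = (1 - Real.log i / Real.log (i+1:ℕ))
          + (Real.log 4 / Real.log i - Real.log 4 / Real.log (i+1:ℕ)) := by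
          unfold ff
          push_cast
          field_simp
      _ ≤ (Real.log (Real.log (i+1:ℕ)) - Real.log (Real.log i))
          + (Real.log 4 / Real.log i - Real.log 4 / Real.log (i+1:ℕ)) := by
          refine add_le_add_left ?_ _
          have key : Real.log (Real.log i / Real.log (i+1:ℕ)) ≤
              Real.log i / Real.log (i+1:ℕ) - 1 :=
            Real.log_le_sub_one_of_pos (by positivity)
          rw [Real.log_div ha.ne' hb.ne'] at key
          linarith
      _ = Psi (i + 1) - Psi i := by
          unfold Psi
          rw [hmax1, hmax2]
          push_cast
          ring

private noncomputable def BB : ℝ :=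
  1 + 2 * (Real.log 4 / Real.log 2) - Real.log (Real.log 2)

/-- Mertens' second theorem (upper bound). -/
private lemma mertens2 {N : ℕ} (hN : 2 ≤ N) :
    ∑ p ∈ PP N, (1 : ℝ) / p ≤ Real.log (Real.log N) + BB := by
  have hlog2 : (0:ℝ) < Real.log 2 := Real.log_pos (by norm_num)
  have hlogN : 0 < Real.log N := log_pos_nat hN
  have hlog2N : Real.log 2 ≤ Real.log N := by
    apply Real.log_le_log (by norm_num)
    exact_mod_cast hN
  have hlog4 : (0:ℝ) ≤ Real.log 4 := Real.log_nonneg (by norm_num)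
  have habel := Finset.sum_range_by_parts ff aa (N + 1)
  simp only [Nat.add_sub_cancel, smul_eq_mul] at habel
  have hlhs : ∑ i ∈ Finset.range (N + 1), ff i * aa i = ∑ p ∈ PP N, (1 : ℝ) / p := by
    unfold PP
    rw [Finset.sum_filter]
    refine Finset.sum_congr rfl fun i _ => ?_
    unfold ff aa
    by_cases hi : i.Prime
    · simp only [hi, if_true]
      have : Real.log i ≠ 0 := (log_pos_nat hi.two_le).ne'
      field_simp
    · simp [hi]
  have key : ∑ p ∈ PP N, (1 : ℝ) / p
      = ff N * GG (N + 1) + ∑ i ∈ Finset.range N, (ff i - ff (i + 1)) * GG (i + 1) := by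
    rw [← hlhs, habel]
    unfold GG
    rw [sub_eq_add_neg, ← Finset.sum_neg_distrib]
    congr 1
    refine Finset.sum_congr rfl fun i _ => ?_
    ring
  rw [key]
  have h1 : ff N * GG (N + 1) ≤ 1 + Real.log 4 / Real.log 2 := by
    have hG := GG_le (by omega : 1 ≤ N)
    have hffN : ff N = 1 / Real.log N := rfl
    calc ff N * GG (N + 1) ≤ ff N * (Real.log N + Real.log 4) := by
          refine mul_le_mul_of_nonneg_left hG ?_
          rw [hffN]; positivity
      _ = 1 + Real.log 4 / Real.log N := by
          rw [hffN]; field_simp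
      _ ≤ 1 + Real.log 4 / Real.log 2 := by
          refine add_le_add_right ?_ _
          exact div_le_div_of_nonneg_left hlog4 hlog2 hlog2N
  have h2 : ∑ i ∈ Finset.range N, (ff i - ff (i + 1)) * GG (i + 1) ≤ Psi N - Psi 0 := by
    calc ∑ i ∈ Finset.range N, (ff i - ff (i + 1)) * GG (i + 1)
        ≤ ∑ i ∈ Finset.range N, (Psi (i + 1) - Psi i) :=
          Finset.sum_le_sum fun i _ => summand_le i
      _ = Psi N - Psi 0 := Finset.sum_range_sub Psi N
  have hPsiN : Psi N = Real.log (Real.log N) - Real.log 4 / Real.log N := by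
    unfold Psi
    rw [max_eq_left hN]
  have hPsi0 : Psi 0 = Real.log (Real.log 2) - Real.log 4 / Real.log 2 := by
    unfold Psi
    norm_num
  have h3 : Psi N - Psi 0 ≤ Real.log (Real.log N) + Real.log 4 / Real.log 2
      - Real.log (Real.log 2) := by
    rw [hPsiN, hPsi0]
    have : 0 ≤ Real.log 4 / Real.log N := by positivity
    linarith
  unfold BB
  linarith

private lemma telescope_sum {N : ℕ} (hN : 2 ≤ N) :
    ∑ p ∈ PP N, (1 / ((p:ℝ) - 1) - 1 / p) ≤ 1 := by
  have hsubset : PP N ⊆ Finset.Ico 2 (N + 1) := by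
    intro p hp
    obtain ⟨hpN, hpp⟩ := mem_PP.1 hp
    rw [Finset.mem_Ico]
    exact ⟨hpp.two_le, by omega⟩
  have hstep : ∑ p ∈ PP N, (1 / ((p:ℝ) - 1) - 1 / p)
      ≤ ∑ n ∈ Finset.Ico 2 (N + 1), (1 / ((n:ℝ) - 1) - 1 / n) := by
    refine Finset.sum_le_sum_of_subset_of_nonneg hsubset fun n hn _ => ?_
    rw [Finset.mem_Ico] at hn
    have h2 : (2:ℝ) ≤ n := by exact_mod_cast hn.1
    rw [sub_nonneg]
    apply one_div_le_one_div_of_le (by linarith)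
    linarith
  refine hstep.trans ?_
  rw [Finset.sum_Ico_eq_sum_range]
  set u : ℕ → ℝ := fun j => -(1 / ((j:ℝ) + 1)) with hu
  have hptw : ∀ i : ℕ, 1 / (((2 + i : ℕ):ℝ) - 1) - 1 / ((2 + i : ℕ):ℝ)
      = u (i + 1) - u i := by
    intro i
    rw [hu]
    simp only
    have hi0 : (0:ℝ) ≤ i := Nat.cast_nonneg i
    have h1 : (i:ℝ) + 1 ≠ 0 := by positivity
    have h2 : (i:ℝ) + 2 ≠ 0 := by positivity
    have h3 : (1:ℝ) + i ≠ 0 := by positivity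
    have h4 : (2:ℝ) + i ≠ 0 := by positivity
    have h5 : (2:ℝ) + i - 1 ≠ 0 := by
      intro h; nlinarith
    push_cast
    field_simp
    ring
  calc ∑ i ∈ Finset.range (N + 1 - 2), (1 / (((2 + i : ℕ):ℝ) - 1) - 1 / ((2 + i : ℕ):ℝ))
      = ∑ i ∈ Finset.range (N + 1 - 2), (u (i + 1) - u i) :=
        Finset.sum_congr rfl fun i _ => hptw i
    _ = u (N + 1 - 2) - u 0 := Finset.sum_range_sub u _
    _ ≤ 1 := by
        rw [hu]
        simp only
        have : (0:ℝ) ≤ 1 / (((N + 1 - 2 : ℕ):ℝ) + 1) := by positivity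
        norm_num
        linarith

private lemma prod_lb {N : ℕ} (hN : 2 ≤ N) :
    Real.exp (-(BB + 1)) / Real.log N ≤ ∏ p ∈ PP N, (1 - 1 / (p : ℝ)) := by
  have hlogN : 0 < Real.log N := log_pos_nat hN
  have hfac : ∀ p ∈ PP N, (0:ℝ) < 1 - 1 / p := by
    intro p hp
    obtain ⟨_, hpp⟩ := mem_PP.1 hp
    have h2 : (2:ℝ) ≤ p := by exact_mod_cast hpp.two_le
    have : 1 / (p:ℝ) ≤ 1 / 2 := one_div_le_one_div_of_le (by norm_num) h2
    linarith
  have hexp : ∏ p ∈ PP N, (1 - 1 / (p : ℝ))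
      = Real.exp (∑ p ∈ PP N, Real.log (1 - 1 / (p:ℝ))) := by
    rw [Real.exp_sum]
    exact (Finset.prod_congr rfl fun p hp => (Real.exp_log (hfac p hp)).symm)
  -- lower bound each log term
  have hterm : ∀ p ∈ PP N, -(1 / (p:ℝ)) - (1 / ((p:ℝ) - 1) - 1 / p)
      ≤ Real.log (1 - 1 / (p:ℝ)) := by
    intro p hp
    obtain ⟨_, hpp⟩ := mem_PP.1 hp
    have h2 : (2:ℝ) ≤ p := by exact_mod_cast hpp.two_le
    have hp0 : (0:ℝ) < p := by linarith
    have hp1 : (0:ℝ) < (p:ℝ) - 1 := by linarith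
    have hx : (0:ℝ) < (p:ℝ) / ((p:ℝ) - 1) := by positivity
    have key := Real.log_le_sub_one_of_pos hx
    have hlogeq : Real.log ((p:ℝ) / ((p:ℝ) - 1)) = - Real.log (1 - 1 / (p:ℝ)) := by
      rw [show (p:ℝ) / ((p:ℝ) - 1) = (1 - 1 / (p:ℝ))⁻¹ from by field_simp, Real.log_inv]
    rw [hlogeq] at key
    have hval : (p:ℝ) / ((p:ℝ) - 1) - 1 = 1 / ((p:ℝ) - 1) := by
      field_simp
      ring
    rw [hval] at key
    have : -(1 / ((p:ℝ) - 1)) ≤ Real.log (1 - 1 / (p:ℝ)) := by linarith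
    linarith
  have hsumlog : -(Real.log (Real.log N) + BB) - 1
      ≤ ∑ p ∈ PP N, Real.log (1 - 1 / (p:ℝ)) := by
    have h1 : ∑ p ∈ PP N, (-(1 / (p:ℝ)) - (1 / ((p:ℝ) - 1) - 1 / p))
        ≤ ∑ p ∈ PP N, Real.log (1 - 1 / (p:ℝ)) :=
      Finset.sum_le_sum hterm
    have h2 : ∑ p ∈ PP N, (-(1 / (p:ℝ)) - (1 / ((p:ℝ) - 1) - 1 / p))
        = -(∑ p ∈ PP N, (1:ℝ) / p) - ∑ p ∈ PP N, (1 / ((p:ℝ) - 1) - 1 / p) := by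
      rw [← Finset.sum_neg_distrib, ← Finset.sum_sub_distrib]
    have h3 := mertens2 hN
    have h4 := telescope_sum hN
    rw [h2] at h1
    linarith
  rw [hexp]
  calc Real.exp (-(BB + 1)) / Real.log N
      = Real.exp (-(BB + 1)) * (Real.exp (Real.log (Real.log N)))⁻¹ := by
        rw [Real.exp_log hlogN, div_eq_mul_inv]
    _ = Real.exp (-(Real.log (Real.log N) + BB) - 1) := by
        rw [show -(Real.log (Real.log N) + BB) - 1
            = -(BB + 1) + (-(Real.log (Real.log N))) by ring]
        rw [Real.exp_add, Real.exp_neg (Real.log (Real.log N))]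
    _ ≤ Real.exp (∑ p ∈ PP N, Real.log (1 - 1 / (p:ℝ))) :=
        Real.exp_le_exp.mpr hsumlog

theorem stmt_19 :
    (∃ c : ℝ, 0 < c ∧ ∀ x : ℝ, 2 ≤ x →
      c / Real.log x ≤ ∏ p ∈ (Finset.range (⌊x⌋₊ + 1)).filter Nat.Prime,
        (1 - 1 / (p : ℝ))) ∧
    (∀ ε : ℝ, 0 < ε → ∃ C : ℝ, 0 < C ∧ ∀ h : ℕ, 2 ≤ h →
      C * (h : ℝ) ^ (-ε) ≤ ∏ p ∈ h.primeFactors, (1 - 1 / (p : ℝ))) := by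
  set c : ℝ := Real.exp (-(BB + 1)) with hc
  have hc0 : 0 < c := Real.exp_pos _
  have part1 : ∀ x : ℝ, 2 ≤ x →
      c / Real.log x ≤ ∏ p ∈ (Finset.range (⌊x⌋₊ + 1)).filter Nat.Prime,
        (1 - 1 / (p : ℝ)) := by
    intro x hx
    have hN2 : 2 ≤ ⌊x⌋₊ := Nat.le_floor (by exact_mod_cast hx)
    have hprod := prod_lb hN2
    have hlogN : 0 < Real.log (⌊x⌋₊ : ℕ) := log_pos_nat hN2
    have hlogx : Real.log (⌊x⌋₊ : ℕ) ≤ Real.log x :=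
      Real.log_le_log (by exact_mod_cast Nat.lt_of_lt_of_le Nat.zero_lt_two hN2)
        (Nat.floor_le (by linarith))
    have h1 : c / Real.log x ≤ c / Real.log (⌊x⌋₊ : ℕ) := by
      have hlx : 0 < Real.log x := lt_of_lt_of_le hlogN hlogx
      exact div_le_div_of_nonneg_left hc0.le hlogN hlogx
    exact h1.trans hprod
  refine ⟨⟨c, hc0, part1⟩, ?_⟩
  intro ε hε
  refine ⟨c * ε, by positivity, ?_⟩
  intro h hh
  have hsub : h.primeFactors ⊆ PP h := by
    intro p hp
    rw [mem_PP]
    exact ⟨Nat.le_of_dvd (by omega) (Nat.dvd_of_mem_primeFactors hp),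
      Nat.prime_of_mem_primeFactors hp⟩
  have hfac01 : ∀ p ∈ PP h, (0:ℝ) ≤ 1 - 1 / p ∧ (1 - 1/(p:ℝ)) ≤ 1 := by
    intro p hp
    obtain ⟨_, hpp⟩ := mem_PP.1 hp
    have h2 : (2:ℝ) ≤ p := by exact_mod_cast hpp.two_le
    have hinv : (0:ℝ) < 1 / p := by positivity
    have : 1 / (p:ℝ) ≤ 1 / 2 := one_div_le_one_div_of_le (by norm_num) h2
    constructor <;> linarith
  have hmono : ∏ p ∈ PP h, (1 - 1/(p:ℝ)) ≤ ∏ p ∈ h.primeFactors, (1 - 1/(p:ℝ)) := by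
    rw [← Finset.prod_sdiff hsub]
    have h1 : ∏ p ∈ PP h \ h.primeFactors, (1 - 1/(p:ℝ)) ≤ 1 :=
      Finset.prod_le_one (fun p hp => (hfac01 p (Finset.mem_sdiff.1 hp).1).1)
        (fun p hp => (hfac01 p (Finset.mem_sdiff.1 hp).1).2)
    have h2 : (0:ℝ) ≤ ∏ p ∈ h.primeFactors, (1 - 1/(p:ℝ)) :=
      Finset.prod_nonneg fun p hp => (hfac01 p (hsub hp)).1
    exact mul_le_of_le_one_left h2 h1
  have hx : (2:ℝ) ≤ (h:ℝ) := by exact_mod_cast hh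
  have hp1 : c / Real.log h ≤ ∏ p ∈ PP h, (1 - 1/(p:ℝ)) := by
    have := part1 (h:ℝ) hx
    rwa [Nat.floor_natCast] at this
  have hlogh : 0 < Real.log h := log_pos_nat hh
  have hlrp : Real.log h ≤ (h:ℝ) ^ ε / ε := Real.log_le_rpow_div (Nat.cast_nonneg h) hε
  have hrp : (0:ℝ) < (h:ℝ) ^ ε := Real.rpow_pos_of_pos (by linarith) ε
  have hneg : (h:ℝ) ^ (-ε) = ((h:ℝ) ^ ε)⁻¹ := Real.rpow_neg (Nat.cast_nonneg h) ε
  have hstep : c * ε * (h:ℝ) ^ (-ε) ≤ c / Real.log h := by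
    have heq : c * ε * (h:ℝ) ^ (-ε) = (c * ε) / (h:ℝ) ^ ε := by
      rw [hneg, div_eq_mul_inv]
    rw [heq, div_le_div_iff₀ hrp hlogh]
    calc c * ε * Real.log h = c * (Real.log h * ε) := by ring
      _ ≤ c * (h:ℝ) ^ ε := mul_le_mul_of_nonneg_left ((le_div_iff₀ hε).mp hlrp) hc0.le
  calc c * ε * (h:ℝ) ^ (-ε) ≤ c / Real.log h := hstep
    _ ≤ ∏ p ∈ PP h, (1 - 1/(p:ℝ)) := hp1
    _ ≤ ∏ p ∈ h.primeFactors, (1 - 1/(p:ℝ)) := hmono
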